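/- The CD distance is a pseudometric satisfying the triangle inequality on strictly positive probability distributions over a finite set: D_CD(P,P) = 0, D_CD(P,Q) = D_CD(Q,P), and D_CD(P,R) ≤ D_CD(P,Q) + D_CD(Q,R), and D_CD(P,Q) = 0 if and only if P = Q. -/
import Mathlib


open Finset

section helpers

variable {Y : Type*} [Fintype Y] [Nonempty Y]

lemma inf'_pos (f : Y → ℝ) (hf : ∀ y, 0 < f y) :
    0 < Finset.univ.inf' Finset.univ_nonempty f := by
  obtain ⟨b, _, hb⟩ := Finset.exists_mem_eq_inf' Finset.univ_nonempty f
  rw [hb]; exact hf b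

lemma inf'_le_sup' (f : Y → ℝ) :
    Finset.univ.inf' Finset.univ_nonempty f ≤ Finset.univ.sup' Finset.univ_nonempty f := by
  classical
  exact le_trans (Finset.inf'_le f (Finset.mem_univ (Classical.arbitrary Y)))
    (Finset.le_sup' f (Finset.mem_univ (Classical.arbitrary Y)))

lemma sup'_inv (f : Y → ℝ) (hf : ∀ y, 0 < f y) :
    Finset.univ.sup' Finset.univ_nonempty (fun y => (f y)⁻¹)
      = (Finset.univ.inf' Finset.univ_nonempty f)⁻¹ := by
  have hI := inf'_pos f hf
  apply le_antisymm
  · apply Finset.sup'_le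
    intro y _
    exact inv_anti₀ hI (Finset.inf'_le f (Finset.mem_univ y))
  · obtain ⟨b, _, hb⟩ := Finset.exists_mem_eq_inf' Finset.univ_nonempty f
    rw [hb]
    exact Finset.le_sup' (fun y => (f y)⁻¹) (Finset.mem_univ b)

lemma inf'_inv (f : Y → ℝ) (hf : ∀ y, 0 < f y) :
    Finset.univ.inf' Finset.univ_nonempty (fun y => (f y)⁻¹)
      = (Finset.univ.sup' Finset.univ_nonempty f)⁻¹ := by
  apply le_antisymm
  · obtain ⟨a, _, ha⟩ := Finset.exists_mem_eq_sup' Finset.univ_nonempty f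
    rw [ha]
    exact Finset.inf'_le (fun y => (f y)⁻¹) (Finset.mem_univ a)
  · apply Finset.le_inf'
    intro y _
    exact inv_anti₀ (hf y) (Finset.le_sup' f (Finset.mem_univ y))

end helpers

/-- The Chan–Darwiche distance between strictly positive distributions on a finite set. -/
noncomputable def CDdist {Y : Type*} [Fintype Y] [Nonempty Y] (P Q : Y → ℝ) : ℝ :=
  Real.log (Finset.univ.sup' Finset.univ_nonempty (fun y => P y / Q y))
    - Real.log (Finset.univ.inf' Finset.univ_nonempty (fun y => P y / Q y))

/-- The CD distance is a symmetric pseudometric on strictly positive probability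
distributions which vanishes exactly on equal distributions. -/
theorem stmt_15 {Y : Type*} [Fintype Y] [Nonempty Y] (P Q R : Y → ℝ)
    (hP : ∀ y, 0 < P y) (hQ : ∀ y, 0 < Q y) (hR : ∀ y, 0 < R y)
    (hPs : ∑ y, P y = 1) (hQs : ∑ y, Q y = 1) (hRs : ∑ y, R y = 1) :
    CDdist P P = 0 ∧ CDdist P Q = CDdist Q P
      ∧ CDdist P R ≤ CDdist P Q + CDdist Q R
      ∧ (CDdist P Q = 0 ↔ P = Q) := by
  classical
  have key0 : ∀ (A B : Y → ℝ), (∀ y, 0 < A y) → (∀ y, 0 < B y) → A = B → CDdist A B = 0 := by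
    intro A B hA hB h
    subst h
    have h1 : (fun y => A y / A y) = fun _ : Y => (1 : ℝ) := by
      funext y; exact div_self (hA y).ne'
    unfold CDdist
    rw [h1, Finset.sup'_const, Finset.inf'_const, sub_self]
  have hPQpos : ∀ y, 0 < P y / Q y := fun y => div_pos (hP y) (hQ y)
  have hQRpos : ∀ y, 0 < Q y / R y := fun y => div_pos (hQ y) (hR y)
  have hPRpos : ∀ y, 0 < P y / R y := fun y => div_pos (hP y) (hR y)
  -- symmetry, proved for general pairs
  have symm : ∀ (A B : Y → ℝ), (∀ y, 0 < A y) → (∀ y, 0 < B y) → CDdist A B = CDdist B A := by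
    intro A B hA hB
    have hAB : ∀ y, 0 < A y / B y := fun y => div_pos (hA y) (hB y)
    have hfun : (fun y => B y / A y) = fun y => (A y / B y)⁻¹ := by
      funext y; rw [inv_div]
    unfold CDdist
    rw [hfun, sup'_inv _ hAB, inf'_inv _ hAB, Real.log_inv, Real.log_inv]
    ring
  -- triangle
  have tri : CDdist P R ≤ CDdist P Q + CDdist Q R := by
    set SPQ := Finset.univ.sup' Finset.univ_nonempty (fun y => P y / Q y) with hSPQ
    set IPQ := Finset.univ.inf' Finset.univ_nonempty (fun y => P y / Q y) with hIPQ
    set SQR := Finset.univ.sup' Finset.univ_nonempty (fun y => Q y / R y) with hSQR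
    set IQR := Finset.univ.inf' Finset.univ_nonempty (fun y => Q y / R y) with hIQR
    set SPR := Finset.univ.sup' Finset.univ_nonempty (fun y => P y / R y) with hSPR
    set IPR := Finset.univ.inf' Finset.univ_nonempty (fun y => P y / R y) with hIPR
    have hIPQpos : 0 < IPQ := inf'_pos _ hPQpos
    have hIQRpos : 0 < IQR := inf'_pos _ hQRpos
    have hIPRpos : 0 < IPR := inf'_pos _ hPRpos
    have hSPQpos : 0 < SPQ := lt_of_lt_of_le hIPQpos (inf'_le_sup' _)
    have hSQRpos : 0 < SQR := lt_of_lt_of_le hIQRpos (inf'_le_sup' _)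
    have hSPRpos : 0 < SPR := lt_of_lt_of_le hIPRpos (inf'_le_sup' _)
    have hmul : ∀ y : Y, P y / R y = (P y / Q y) * (Q y / R y) := by
      intro y
      rw [div_mul_div_comm, mul_comm (P y) (Q y), mul_div_mul_left _ _ (hQ y).ne']
    have hsup : SPR ≤ SPQ * SQR := by
      apply Finset.sup'_le
      intro y _
      rw [hmul y]
      have b1 : P y / Q y ≤ SPQ := Finset.le_sup' (fun y => P y / Q y) (Finset.mem_univ y)
      have b2 : Q y / R y ≤ SQR := Finset.le_sup' (fun y => Q y / R y) (Finset.mem_univ y)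
      exact mul_le_mul b1 b2 (hQRpos y).le hSPQpos.le
    have hinf : IPQ * IQR ≤ IPR := by
      apply Finset.le_inf'
      intro y _
      rw [hmul y]
      have b1 : IPQ ≤ P y / Q y := Finset.inf'_le (fun y => P y / Q y) (Finset.mem_univ y)
      have b2 : IQR ≤ Q y / R y := Finset.inf'_le (fun y => Q y / R y) (Finset.mem_univ y)
      exact mul_le_mul b1 b2 hIQRpos.le (hPQpos y).le
    have h1 : Real.log SPR ≤ Real.log SPQ + Real.log SQR := by
      rw [← Real.log_mul hSPQpos.ne' hSQRpos.ne']
      exact Real.log_le_log hSPRpos hsup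
    have h2 : Real.log IPQ + Real.log IQR ≤ Real.log IPR := by
      rw [← Real.log_mul hIPQpos.ne' hIQRpos.ne']
      exact Real.log_le_log (mul_pos hIPQpos hIQRpos) hinf
    unfold CDdist
    simp only [← hSPQ, ← hIPQ, ← hSQR, ← hIQR, ← hSPR, ← hIPR]
    linarith
  refine ⟨key0 P P hP hP rfl, symm P Q hP hQ, tri, ?_, fun h => key0 P Q hP hQ h⟩
  -- CDdist P Q = 0 → P = Q
  intro h0
  set S := Finset.univ.sup' Finset.univ_nonempty (fun y => P y / Q y) with hS
  set I := Finset.univ.inf' Finset.univ_nonempty (fun y => P y / Q y) with hI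
  have hIpos : 0 < I := inf'_pos _ hPQpos
  have hIS : I ≤ S := inf'_le_sup' _
  have hSpos : 0 < S := lt_of_lt_of_le hIpos hIS
  have hlog : Real.log S = Real.log I := by
    unfold CDdist at h0
    rw [← hS, ← hI] at h0
    linarith
  have hSI : S = I := by
    have := congrArg Real.exp hlog
    rwa [Real.exp_log hSpos, Real.exp_log hIpos] at this
  have hconst : ∀ y, P y / Q y = S := by
    intro y
    have h1 : P y / Q y ≤ S := Finset.le_sup' (fun y => P y / Q y) (Finset.mem_univ y)
    have h2 : I ≤ P y / Q y := Finset.inf'_le (fun y => P y / Q y) (Finset.mem_univ y)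
    rw [← hSI] at h2
    linarith
  have hPy : ∀ y, P y = S * Q y := by
    intro y
    have := hconst y
    rw [div_eq_iff (hQ y).ne'] at this
    linarith [this]
  have hsum : ∑ y, P y = S * ∑ y, Q y := by
    rw [Finset.mul_sum]
    exact Finset.sum_congr rfl (fun y _ => hPy y)
  rw [hPs, hQs] at hsum
  have hS1 : S = 1 := by linarith [hsum]
  funext y
  rw [hPy y, hS1, one_mul]
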